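/- Let n ≥ 2k ≥ 0 and let w be a permutation of {1,...,n}. Then w = w_{ℓ_1,...,ℓ_k} for some 1 ≤ ℓ_1 < ℓ_2 < ... < ℓ_k ≤ n if and only if the inverse permutation w^{-1} is strictly increasing on the set {1,2,...,n−k} and strictly increasing on the set {n−k+1,...,n}. -/

import Mathlib

open scoped BigOperators
-- counting lemmas
lemma filterA {k : ℕ} {ℓ : ℕ → ℕ}
    (hgm : ∀ j j' : ℕ, 1 ≤ j → j < j' → j' ≤ k → ℓ j < ℓ j')
    {j : ℕ} (hj1 : 1 ≤ j) (hjk : j ≤ k) :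
    ((Finset.Icc 1 k).filter fun r => ℓ r ≤ ℓ j) = Finset.Icc 1 j := by
  ext r
  simp only [Finset.mem_filter, Finset.mem_Icc]
  constructor
  · rintro ⟨⟨hr1, hrk⟩, hle⟩
    refine ⟨hr1, ?_⟩
    by_contra hc
    exact absurd (hgm j r hj1 (by omega) hrk) (by omega)
  · rintro ⟨hr1, hrj⟩
    refine ⟨⟨hr1, by omega⟩, ?_⟩
    rcases eq_or_lt_of_le hrj with rfl | hlt
    · exact le_refl _
    · exact (hgm r j hr1 hlt hjk).le

lemma ell_inj {k : ℕ} {ℓ : ℕ → ℕ}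
    (hgm : ∀ j j' : ℕ, 1 ≤ j → j < j' → j' ≤ k → ℓ j < ℓ j')
    {r s : ℕ} (hr : 1 ≤ r) (hrk : r ≤ k) (hs : 1 ≤ s) (hsk : s ≤ k)
    (he : ℓ r = ℓ s) : r = s := by
  rcases lt_trichotomy r s with hlt | he' | hlt
  · exact absurd (hgm r s hr hlt hsk) (by omega)
  · exact he'
  · exact absurd (hgm s r hs hlt hrk) (by omega)

lemma filterB {k : ℕ} {ℓ : ℕ → ℕ}
    (hgm : ∀ j j' : ℕ, 1 ≤ j → j < j' → j' ≤ k → ℓ j < ℓ j')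
    {i i' : ℕ} (hii : i ≤ i') :
    ((Finset.Icc 1 k).filter fun r => ℓ r < i').card ≤
      ((Finset.Icc 1 k).filter fun r => ℓ r < i).card + (i' - i) := by
  have hsub : ((Finset.Icc 1 k).filter fun r => ℓ r < i') ⊆
      ((Finset.Icc 1 k).filter fun r => ℓ r < i) ∪
        ((Finset.Icc 1 k).filter fun r => i ≤ ℓ r ∧ ℓ r < i') := by
    intro r hr
    simp only [Finset.mem_filter, Finset.mem_union] at hr ⊢
    rcases lt_or_ge (ℓ r) i with hc | hc
    · exact Or.inl ⟨hr.1, hc⟩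
    · exact Or.inr ⟨hr.1, hc, hr.2⟩
  have hmid : (((Finset.Icc 1 k).filter fun r => i ≤ ℓ r ∧ ℓ r < i').card) ≤ i' - i := by
    have := Finset.card_le_card_of_injOn (f := ℓ)
      (s := (Finset.Icc 1 k).filter fun r => i ≤ ℓ r ∧ ℓ r < i')
      (t := Finset.Ico i i')
      (by intro r hr; simp only [Finset.mem_coe, Finset.mem_filter, Finset.mem_Icc] at hr
          simp only [Finset.mem_coe, Finset.mem_Ico]; omega)
      (by intro r hr s hs he
          simp only [Finset.coe_filter, Finset.mem_Icc, Set.mem_setOf_eq] at hr hs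
          exact ell_inj hgm hr.1.1 hr.1.2 hs.1.1 hs.1.2 he)
    simpa using this
  calc ((Finset.Icc 1 k).filter fun r => ℓ r < i').card
      ≤ _ := Finset.card_le_card hsub
    _ ≤ _ := Finset.card_union_le _ _
    _ ≤ _ := by omega

lemma filterC {k : ℕ} {ℓ : ℕ → ℕ}
    (hgm : ∀ j j' : ℕ, 1 ≤ j → j < j' → j' ≤ k → ℓ j < ℓ j') (i : ℕ) :
    ((Finset.Icc 1 k).filter fun r => ℓ r < i).card ≤ i := by
  have := filterB hgm (Nat.zero_le i)
  have h0 : ((Finset.Icc 1 k).filter fun r => ℓ r < 0) = ∅ := by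
    simp
  rw [h0] at this
  simpa using this

/-- The permutation `w_{ℓ₁,…,ℓₖ}` of `{1,…,n}` (as a function `ℕ → ℕ`):
`w i = n - k + j` if `i = ℓ j` for some `1 ≤ j ≤ k`, and `w i = i - j` if
`ℓ j < i < ℓ (j+1)` (with conventions `ℓ 0 = 0`, `ℓ (k+1) = n+1`); here `j`
is recovered as the number of `r ∈ {1,…,k}` with `ℓ r ≤ i` (resp. `ℓ r < i`). -/
def wPerm (n k : ℕ) (ℓ : ℕ → ℕ) (i : ℕ) : ℕ :=
  if ∃ j ∈ Finset.Icc 1 k, ℓ j = i then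
    n - k + ((Finset.Icc 1 k).filter fun j => ℓ j ≤ i).card
  else
    i - ((Finset.Icc 1 k).filter fun j => ℓ j < i).card

/-- The conditions `1 ≤ ℓ 1 < ℓ 2 < ⋯ < ℓ k ≤ n`. -/
def goodL (n k : ℕ) (ℓ : ℕ → ℕ) : Prop :=
  (∀ j ∈ Finset.Icc 1 k, 1 ≤ ℓ j ∧ ℓ j ≤ n) ∧
    ∀ j j' : ℕ, 1 ≤ j → j < j' → j' ≤ k → ℓ j < ℓ j'

theorem wPerm_iff_inverse_strictMono (n k : ℕ) (h : 2 * k ≤ n) (w v : ℕ → ℕ)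
    (hw : Set.BijOn w (Set.Icc 1 n) (Set.Icc 1 n))
    (hv : ∀ i ∈ Set.Icc 1 n, v (w i) = i ∧ w (v i) = i) :
    (∃ ℓ : ℕ → ℕ, goodL n k ℓ ∧ ∀ i ∈ Set.Icc 1 n, w i = wPerm n k ℓ i) ↔
      (StrictMonoOn v (Set.Icc 1 (n - k)) ∧
        StrictMonoOn v (Set.Icc (n - k + 1) n)) := by
  -- v maps Icc 1 n into itself, with w (v i) = i
  have hvmem : ∀ i ∈ Set.Icc 1 n, v i ∈ Set.Icc 1 n := by
    intro i hi
    obtain ⟨x, hx, hxi⟩ := hw.2.2 hi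
    have := (hv x hx).1
    rw [hxi] at this
    rw [this]; exact hx
  constructor
  · rintro ⟨ℓ, ⟨hgb, hgm⟩, hwe⟩
    -- value of w at ℓ j
    have hℓmem : ∀ j, 1 ≤ j → j ≤ k → ℓ j ∈ Set.Icc 1 n := by
      intro j h1 h2
      have := hgb j (Finset.mem_Icc.mpr ⟨h1, h2⟩)
      exact Set.mem_Icc.mpr this
    have hwℓ : ∀ j, 1 ≤ j → j ≤ k → w (ℓ j) = n - k + j := by
      intro j h1 h2
      rw [hwe _ (hℓmem j h1 h2)]
      unfold wPerm
      rw [if_pos ⟨j, Finset.mem_Icc.mpr ⟨h1, h2⟩, rfl⟩, filterA hgm h1 h2]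
      rw [Nat.card_Icc]
      omega
    have hvℓ : ∀ j, 1 ≤ j → j ≤ k → v (n - k + j) = ℓ j := by
      intro j h1 h2
      have := (hv (ℓ j) (hℓmem j h1 h2)).1
      rwa [hwℓ j h1 h2] at this
    constructor
    · -- strict mono on [1, n-k]
      intro a ha b hb hab
      simp only [Set.mem_Icc] at ha hb
      have han : a ∈ Set.Icc 1 n := Set.mem_Icc.mpr ⟨ha.1, by omega⟩
      have hbn : b ∈ Set.Icc 1 n := Set.mem_Icc.mpr ⟨hb.1, by omega⟩
      have hva := hvmem a han
      have hvb := hvmem b hbn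
      have hwa : w (v a) = a := (hv a han).2
      have hwb : w (v b) = b := (hv b hbn).2
      -- at points s with w s ≤ n - k, the else branch applies
      have key : ∀ s ∈ Set.Icc 1 n, w s ≤ n - k →
          w s = s - ((Finset.Icc 1 k).filter fun r => ℓ r < s).card := by
        intro s hs hsle
        have hws := hwe s hs
        unfold wPerm at hws
        by_cases hex : ∃ j ∈ Finset.Icc 1 k, ℓ j = s
        · rw [if_pos hex] at hws
          obtain ⟨j, hj, hjs⟩ := hex
          have hpos : 0 < ((Finset.Icc 1 k).filter fun r => ℓ r ≤ s).card := by
            apply Finset.card_pos.mpr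
            exact ⟨j, Finset.mem_filter.mpr ⟨hj, le_of_eq hjs⟩⟩
          omega
        · rw [if_neg hex] at hws
          exact hws
      have hka : w (v a) ≤ n - k := by omega
      have hkb : w (v b) ≤ n - k := by omega
      have ea := key (v a) hva (by omega)
      have eb := key (v b) hvb (by omega)
      rw [hwa] at ea; rw [hwb] at eb
      by_contra hc
      push_neg at hc
      -- v b ≤ v a, show b ≤ a
      have hmono := filterB hgm (i := v b) (i' := v a) hc
      have hca := filterC hgm (v a)
      have hcb := filterC hgm (v b)
      omega
    · -- strict mono on [n-k+1, n]
      intro a ha b hb hab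
      simp only [Set.mem_Icc] at ha hb
      have hja : a = n - k + (a - (n - k)) := by omega
      have hjb : b = n - k + (b - (n - k)) := by omega
      rw [hja, hvℓ (a - (n - k)) (by omega) (by omega),
          hjb, hvℓ (b - (n - k)) (by omega) (by omega)]
      exact hgm _ _ (by omega) (by omega) (by omega)
  · rintro ⟨h1, h2⟩
    refine ⟨fun j => v (n - k + j), ⟨?_, ?_⟩, ?_⟩
    · intro j hj
      rw [Finset.mem_Icc] at hj
      have : n - k + j ∈ Set.Icc 1 n := Set.mem_Icc.mpr ⟨by omega, by omega⟩
      have := hvmem _ this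
      exact Set.mem_Icc.mp this
    · intro j j' hj hjj' hj'k
      exact h2 (Set.mem_Icc.mpr ⟨by omega, by omega⟩)
        (Set.mem_Icc.mpr ⟨by omega, by omega⟩) (by omega)
    · intro i hi
      set ℓ : ℕ → ℕ := fun j => v (n - k + j) with hℓdef
      have hgm : ∀ j j' : ℕ, 1 ≤ j → j < j' → j' ≤ k → ℓ j < ℓ j' := by
        intro j j' hj hjj' hj'k
        exact h2 (Set.mem_Icc.mpr ⟨by omega, by omega⟩)
          (Set.mem_Icc.mpr ⟨by omega, by omega⟩) (by omega)
      have hwℓ : ∀ j, 1 ≤ j → j ≤ k → w (ℓ j) = n - k + j := by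
        intro j hj1 hjk
        exact (hv (n - k + j) (Set.mem_Icc.mpr ⟨by omega, by omega⟩)).2
      have hℓmem : ∀ j, 1 ≤ j → j ≤ k → ℓ j ∈ Set.Icc 1 n := by
        intro j hj1 hjk
        exact hvmem _ (Set.mem_Icc.mpr ⟨by omega, by omega⟩)
      have hwi := hw.1 hi
      rw [Set.mem_Icc] at hwi
      rw [Set.mem_Icc] at hi
      by_cases hcase : w i ≤ n - k
      · -- else branch
        have hnex : ¬ ∃ j ∈ Finset.Icc 1 k, ℓ j = i := by
          rintro ⟨j, hj, hji⟩
          rw [Finset.mem_Icc] at hj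
          have := hwℓ j hj.1 hj.2
          rw [hji] at this
          omega
        unfold wPerm
        rw [if_neg hnex]
        -- counting argument
        have hcardA : ((Finset.Icc 1 i).filter fun s => w s ≤ n - k).card = w i := by
          have heq : ((Finset.Icc 1 i).filter fun s => w s ≤ n - k).card =
              (Finset.Icc 1 (w i)).card := by
            apply Finset.card_bij (fun s _ => w s)
            · intro s hs
              rw [Finset.mem_filter, Finset.mem_Icc] at hs
              have hsn : s ∈ Set.Icc 1 n := Set.mem_Icc.mpr ⟨hs.1.1, by omega⟩
              have hwsn := hw.1 hsn
              rw [Set.mem_Icc] at hwsn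
              rw [Finset.mem_Icc]
              refine ⟨hwsn.1, ?_⟩
              -- w s ≤ w i since s ≤ i, via v strict mono on [1, n-k]
              by_contra hcon
              push_neg at hcon
              have := h1 (Set.mem_Icc.mpr ⟨by omega, hcase⟩)
                (Set.mem_Icc.mpr ⟨hwsn.1, hs.2⟩) hcon
              rw [(hv s hsn).1, (hv i (Set.mem_Icc.mpr hi)).1] at this
              omega
            · intro s hs t ht hst
              rw [Finset.mem_filter, Finset.mem_Icc] at hs ht
              have hsn : s ∈ Set.Icc 1 n := Set.mem_Icc.mpr ⟨hs.1.1, by omega⟩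
              have htn : t ∈ Set.Icc 1 n := Set.mem_Icc.mpr ⟨ht.1.1, by omega⟩
              have := congrArg v hst
              rwa [(hv s hsn).1, (hv t htn).1] at this
            · intro m hm
              rw [Finset.mem_Icc] at hm
              have hmn : m ∈ Set.Icc 1 n := Set.mem_Icc.mpr ⟨hm.1, by omega⟩
              have hvm := hvmem m hmn
              rw [Set.mem_Icc] at hvm
              have hwvm : w (v m) = m := (hv m hmn).2
              have hvmi : v m ≤ i := by
                rcases eq_or_lt_of_le hm.2 with he | hlt
                · rw [he, (hv i (Set.mem_Icc.mpr hi)).1]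
                · have := h1 (Set.mem_Icc.mpr ⟨hm.1, by omega⟩)
                    (Set.mem_Icc.mpr ⟨by omega, hcase⟩) hlt
                  rw [(hv i (Set.mem_Icc.mpr hi)).1] at this
                  exact this.le
              exact ⟨v m, Finset.mem_filter.mpr ⟨Finset.mem_Icc.mpr ⟨hvm.1, hvmi⟩,
                by omega⟩, hwvm⟩
          rw [heq, Nat.card_Icc]
          omega
        have hcardA' : ((Finset.Icc 1 i).filter fun s => ¬ w s ≤ n - k).card =
            ((Finset.Icc 1 k).filter fun r => ℓ r < i).card := by
          apply Finset.card_bij (fun s _ => w s - (n - k))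
          · intro s hs
            rw [Finset.mem_filter, Finset.mem_Icc] at hs
            have hsn : s ∈ Set.Icc 1 n := Set.mem_Icc.mpr ⟨hs.1.1, by omega⟩
            have hwsn := hw.1 hsn
            rw [Set.mem_Icc] at hwsn
            rw [Finset.mem_filter, Finset.mem_Icc]
            refine ⟨⟨by omega, by omega⟩, ?_⟩
            have hℓv : ℓ (w s - (n - k)) = s := by
              have : n - k + (w s - (n - k)) = w s := by omega
              rw [hℓdef]
              simp only
              rw [this, (hv s hsn).1]
            rw [hℓv]
            -- s < i since s ≤ i and s ≠ i (w i ≤ n-k < w s)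
            rcases eq_or_lt_of_le hs.1.2 with he | hlt
            · exfalso; rw [he] at hs; exact hs.2 hcase
            · exact hlt
          · intro s hs t ht hst
            rw [Finset.mem_filter, Finset.mem_Icc] at hs ht
            have hsn : s ∈ Set.Icc 1 n := Set.mem_Icc.mpr ⟨hs.1.1, by omega⟩
            have htn : t ∈ Set.Icc 1 n := Set.mem_Icc.mpr ⟨ht.1.1, by omega⟩
            have hwsn := hw.1 hsn
            have hwtn := hw.1 htn
            rw [Set.mem_Icc] at hwsn hwtn
            have hwst : w s = w t := by omega
            have := congrArg v hwst
            rwa [(hv s hsn).1, (hv t htn).1] at this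
          · intro r hr
            rw [Finset.mem_filter, Finset.mem_Icc] at hr
            have hℓr := hℓmem r hr.1.1 hr.1.2
            rw [Set.mem_Icc] at hℓr
            have hwr := hwℓ r hr.1.1 hr.1.2
            refine ⟨ℓ r, Finset.mem_filter.mpr ⟨Finset.mem_Icc.mpr
              ⟨hℓr.1, hr.2.le⟩, by omega⟩, by omega⟩
        have hsplit := Finset.card_filter_add_card_filter_not
          (s := Finset.Icc 1 i) (p := fun s => w s ≤ n - k)
        rw [hcardA, hcardA', Nat.card_Icc] at hsplit
        omega
      · -- if branch: w i = n - k + j with ℓ j = i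
        push_neg at hcase
        have hj1 : 1 ≤ w i - (n - k) := by omega
        have hjk : w i - (n - k) ≤ k := by omega
        have hℓj : ℓ (w i - (n - k)) = i := by
          rw [hℓdef]
          simp only
          rw [show n - k + (w i - (n - k)) = w i by omega,
            (hv i (Set.mem_Icc.mpr hi)).1]
        unfold wPerm
        rw [if_pos ⟨w i - (n - k), Finset.mem_Icc.mpr ⟨hj1, hjk⟩, hℓj⟩]
        have hfa := filterA hgm hj1 hjk
        rw [hℓj] at hfa
        rw [hfa, Nat.card_Icc]
        omega
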